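/- Let N ≥ 2 and 1 ≤ k ≤ N-1 be integers and let s_k(u) = (1-u_1-⋯-u_k)^{N-k-1} for u ∈ ℝ^k. Then for every u in the open simplex Σ_k: k(N-k-1)·s_k(u) + ∑_{i=1}^k (1+(N-2k-2)u_i)·∂_i s_k(u) + ∑_{i=1}^k u_i(1-u_i)·∂_{ii} s_k(u) − ∑_{i≠j} u_i u_j·∂_{ij} s_k(u) = 0, where ∂_i, ∂_{ii}, ∂_{ij} denote the first and second partial derivatives with respect to the coordinates of u. -/

import Mathlib

/-- Partial derivative in the `i`-th coordinate direction. -/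
noncomputable def pd {k : ℕ} (f : (Fin k → ℝ) → ℝ) (i : Fin k) (u : Fin k → ℝ) : ℝ :=
  fderiv ℝ f u (Pi.single i 1)

/-- The open standard simplex of `ℝ^k`. -/
def stdSimplex' (k : ℕ) : Set (Fin k → ℝ) :=
  {u | (∀ i, 0 < u i) ∧ ∑ i, u i < 1}

noncomputable def L (k : ℕ) : (Fin k → ℝ) →L[ℝ] ℝ :=
  ∑ m, ContinuousLinearMap.proj (R := ℝ) (φ := fun _ : Fin k => ℝ) m

lemma hasD (k n : ℕ) (u : Fin k → ℝ) :
    HasFDerivAt (fun v : Fin k → ℝ => (1 - ∑ m, v m) ^ n)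
      (((n : ℝ) * (1 - ∑ m, u m) ^ (n - 1)) • (-(L k))) u := by
  have hL : HasFDerivAt (fun v : Fin k → ℝ => ∑ m, v m) (L k) u := by
    have := (L k).hasFDerivAt (x := u)
    convert this using 1
    ext v
    simp [L]
  have hg : HasFDerivAt (fun v : Fin k → ℝ => 1 - ∑ m, v m) (-(L k)) u := by
    exact ((hasFDerivAt_const (1:ℝ) u).sub hL).congr_fderiv (by simp)
  exact (hasDerivAt_pow n (1 - ∑ m, u m)).comp_hasFDerivAt u hg

lemma pdA (k n : ℕ) (i : Fin k) (u : Fin k → ℝ) :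
    pd (fun v => (1 - ∑ m, v m) ^ n) i u = -(n : ℝ) * (1 - ∑ m, u m) ^ (n - 1) := by
  rw [pd, (hasD k n u).fderiv]
  simp [L, Finset.sum_pi_single]

lemma pdB (k n : ℕ) (i j : Fin k) (u : Fin k → ℝ) :
    pd (pd (fun v => (1 - ∑ m, v m) ^ n) j) i u =
      (n : ℝ) * ((n - 1 : ℕ) : ℝ) * (1 - ∑ m, u m) ^ (n - 2) := by
  have h1 : pd (fun v => (1 - ∑ m, v m) ^ n) j =
      fun w => -(n : ℝ) * (1 - ∑ m, w m) ^ (n - 1) := by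
    funext w; exact pdA k n j w
  rw [h1, pd]
  have hd : DifferentiableAt ℝ (fun w : Fin k → ℝ => (1 - ∑ m, w m) ^ (n - 1)) u :=
    (hasD k (n - 1) u).differentiableAt
  rw [fderiv_const_mul hd]
  have := pdA k (n - 1) i u
  rw [pd] at this
  simp only [ContinuousLinearMap.smul_apply, this, smul_eq_mul]
  have : n - 1 - 1 = n - 2 := by omega
  rw [this]
  ring

/-- The Dirichlet density `s_k(u) = (1-u_1-⋯-u_k)^{N-k-1}` is annihilated on the simplex by
`k(N-k-1) + ∑_i (1+(N-2k-2)u_i)∂_i + ∑_i u_i(1-u_i)∂_{ii} - ∑_{i≠j} u_i u_j ∂_{ij}`. -/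
theorem stmt_9 (N k : ℕ) (hN : 2 ≤ N) (hk1 : 1 ≤ k) (hk2 : k ≤ N - 1)
    (u : Fin k → ℝ) (hu : u ∈ stdSimplex' k) :
    (k : ℝ) * ((N : ℝ) - k - 1) * (1 - ∑ i, u i) ^ (N - k - 1) +
        (∑ i, (1 + ((N : ℝ) - 2 * k - 2) * u i) *
          pd (fun v => (1 - ∑ m, v m) ^ (N - k - 1)) i u) +
        (∑ i, u i * (1 - u i) *
          pd (pd (fun v => (1 - ∑ m, v m) ^ (N - k - 1)) i) i u) -
        (∑ i, ∑ j, if i ≠ j then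
          u i * u j * pd (pd (fun v => (1 - ∑ m, v m) ^ (N - k - 1)) j) i u else 0) = 0 := by
  set n := N - k - 1 with hn
  have hc1 : (n : ℝ) = (N : ℝ) - k - 1 := by
    rw [hn, Nat.cast_sub (by omega : 1 ≤ N - k), Nat.cast_sub (by omega : k ≤ N)]
    simp
  have hc2 : ((N : ℝ) - 2 * k - 2) = (n : ℝ) - k - 1 := by rw [hc1]; ring
  simp only [pdA, pdB, ← hc1, hc2]
  set S := ∑ i, u i with hS
  set P := (1 : ℝ) - S with hP
  set Q := ∑ i, u i * u i with hQ
  -- simplify the three sums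
  have e1 : ∑ i, (1 + ((n : ℝ) - k - 1) * u i) * (-(n : ℝ) * P ^ (n - 1))
      = (k : ℝ) * (-(n : ℝ) * P ^ (n - 1)) + ((n : ℝ) - k - 1) * (-(n : ℝ) * P ^ (n - 1)) * S := by
    rw [Finset.sum_congr rfl (fun i _ => by
      show (1 + ((n : ℝ) - k - 1) * u i) * (-(n : ℝ) * P ^ (n - 1)) =
        (-(n : ℝ) * P ^ (n - 1)) + ((n : ℝ) - k - 1) * (-(n : ℝ) * P ^ (n - 1)) * u i
      ring)]
    rw [Finset.sum_add_distrib, Finset.sum_const, ← Finset.mul_sum, ← hS]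
    simp [mul_comm]
  have e2 : ∑ i, u i * (1 - u i) * ((n : ℝ) * ((n - 1 : ℕ) : ℝ) * P ^ (n - 2))
      = ((n : ℝ) * ((n - 1 : ℕ) : ℝ) * P ^ (n - 2)) * S
        - ((n : ℝ) * ((n - 1 : ℕ) : ℝ) * P ^ (n - 2)) * Q := by
    rw [Finset.sum_congr rfl (fun i _ => by
      show u i * (1 - u i) * ((n : ℝ) * ((n - 1 : ℕ) : ℝ) * P ^ (n - 2)) =
        ((n : ℝ) * ((n - 1 : ℕ) : ℝ) * P ^ (n - 2)) * u i
        - ((n : ℝ) * ((n - 1 : ℕ) : ℝ) * P ^ (n - 2)) * (u i * u i)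
      ring)]
    rw [Finset.sum_sub_distrib, ← Finset.mul_sum, ← Finset.mul_sum, ← hS, ← hQ]
  have e3 : (∑ i, ∑ j, if i ≠ j then
        u i * u j * ((n : ℝ) * ((n - 1 : ℕ) : ℝ) * P ^ (n - 2)) else 0)
      = ((n : ℝ) * ((n - 1 : ℕ) : ℝ) * P ^ (n - 2)) * (S * S)
        - ((n : ℝ) * ((n - 1 : ℕ) : ℝ) * P ^ (n - 2)) * Q := by
    set c := (n : ℝ) * ((n - 1 : ℕ) : ℝ) * P ^ (n - 2) with hc
    have inner : ∀ i : Fin k, (∑ j, if i ≠ j then u i * u j * c else 0)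
        = (∑ j, u i * u j * c) - u i * u i * c := by
      intro i
      rw [Finset.sum_congr rfl (fun j _ => by
        show (if i ≠ j then u i * u j * c else 0) =
          u i * u j * c - (if i = j then u i * u j * c else 0)
        split_ifs with h <;> simp_all)]
      rw [Finset.sum_sub_distrib, Finset.sum_ite_eq, if_pos (Finset.mem_univ i)]
    rw [Finset.sum_congr rfl fun i _ => inner i, Finset.sum_sub_distrib]
    have : ∀ i : Fin k, (∑ j, u i * u j * c) = u i * S * c := by
      intro i
      rw [Finset.sum_congr rfl (fun j _ => by ring : ∀ j ∈ Finset.univ, u i * u j * c = u i * c * u j),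
        ← Finset.mul_sum, ← hS]; ring
    rw [Finset.sum_congr rfl fun i _ => this i]
    rw [Finset.sum_congr rfl (fun i _ => by ring : ∀ i ∈ Finset.univ, u i * S * c = S * c * u i),
      ← Finset.mul_sum, ← hS]
    rw [Finset.sum_congr rfl (fun i _ => by ring : ∀ i ∈ Finset.univ, u i * u i * c = c * (u i * u i)),
      ← Finset.mul_sum, ← hQ]
    ring
  rw [e1, e2, e3]
  clear_value n
  match n with
  | 0 => push_cast; ring
  | 1 => push_cast; norm_num; ring
  | (m + 2) =>
    simp only [show m + 2 - 1 = m + 1 from rfl, show m + 2 - 2 = m from rfl]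
    push_cast
    rw [hP]
    ring
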